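/- Proposition 1 of the paper (dissipated work identity for the non-ideal TPM scheme, classical-reduced form): β * (W_nonid − ΔF) = ΔS₀ + D, where ΔF = β⁻¹ * Real.log (Z⁰ / Zf); r l = ∑ n, p n * q l n is the unconditional post-measurement distribution of the first measurement and s m = ∑ l, r l * P l m is the diagonal of the evolved state ρ̃^(f) in the final energy eigenbasis; ΔS₀ = (∑ l, Real.negMulLog (r l)) − (∑ n, Real.negMulLog (p n)) is the entropy change due to the first non-ideal measurement; and D = −(∑ l, Real.negMulLog (r l)) − ∑ m, s m * Real.log (Real.exp (−β * Ef m) / Zf) is the relative entropy D(ρ̃^(f) ‖ τ^(f)) (using unitary invariance of the von Neumann entropy, S(ρ̃^(f)) = ∑ l, Real.negMulLog (r l)). -/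
import Mathlib


open Finset

/-- Proposition 1 (dissipated work identity for the non-ideal TPM scheme,
classical-reduced form): `β * (W_nonid − ΔF) = ΔS₀ + D`, where
`ΔS₀ = H(r) − H(p)` is the entropy change of the first non-ideal measurement
and `D = −H(r) − ∑ m, s m * log (exp (−β Ef m) / Zf)` is the relative entropy
`D(ρ̃^(f) ‖ τ^(f))`, with `r l = ∑ n, p n * q l n` and
`s m = ∑ l, r l * P l m`. -/
theorem dissipated_work_identity
    (d : ℕ) (hd : 1 ≤ d) (E0 Ef : Fin d → ℝ) (β : ℝ) (hβ : 0 < β)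
    (Z0 Zf : ℝ)
    (hZ0 : Z0 = ∑ n, Real.exp (-β * E0 n))
    (hZf : Zf = ∑ m, Real.exp (-β * Ef m))
    (p : Fin d → ℝ)
    (hp : ∀ n, p n = Real.exp (-β * E0 n) / Z0)
    (P : Fin d → Fin d → ℝ)
    (hP0 : ∀ l m, 0 ≤ P l m) (hP1 : ∀ l, ∑ m, P l m = 1)
    (q : Fin d → Fin d → ℝ)
    (hq0 : ∀ l n, 0 ≤ q l n) (hq1 : ∀ n, ∑ l, q l n = 1)
    (W ΔF : ℝ)
    (hW : W = ∑ n, ∑ m, ∑ l, p n * q l n * P l m * (Ef m - E0 n))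
    (hΔF : ΔF = β⁻¹ * Real.log (Z0 / Zf))
    (r s : Fin d → ℝ)
    (hr : ∀ l, r l = ∑ n, p n * q l n)
    (hs : ∀ m, s m = ∑ l, r l * P l m)
    (ΔS0 D : ℝ)
    (hΔS0 : ΔS0 = (∑ l, Real.negMulLog (r l)) - (∑ n, Real.negMulLog (p n)))
    (hD : D = -(∑ l, Real.negMulLog (r l)) -
        ∑ m, s m * Real.log (Real.exp (-β * Ef m) / Zf)) :
    β * (W - ΔF) = ΔS0 + D := by
  have hne : Nonempty (Fin d) := ⟨⟨0, hd⟩⟩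
  have hZ0pos : 0 < Z0 := hZ0 ▸ Finset.sum_pos (fun _ _ => Real.exp_pos _) univ_nonempty
  have hZfpos : 0 < Zf := hZf ▸ Finset.sum_pos (fun _ _ => Real.exp_pos _) univ_nonempty
  have hpsum : ∑ n, p n = 1 := by
    simp only [hp, ← Finset.sum_div, ← hZ0]
    exact div_self hZ0pos.ne'
  have hrsum : ∑ l, r l = 1 := by
    simp only [hr]
    rw [Finset.sum_comm]
    calc ∑ n, ∑ l, p n * q l n = ∑ n, p n * ∑ l, q l n := by
          simp [Finset.mul_sum]
      _ = 1 := by simp [hq1, hpsum]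
  have hssum : ∑ m, s m = 1 := by
    simp only [hs]
    rw [Finset.sum_comm]
    calc ∑ l, ∑ m, r l * P l m = ∑ l, r l * ∑ m, P l m := by
          simp [Finset.mul_sum]
      _ = 1 := by simp [hP1, hrsum]
  -- W as difference of average energies
  have hW' : W = (∑ m, s m * Ef m) - (∑ n, p n * E0 n) := by
    rw [hW]
    have expand : ∀ n m l : Fin d, p n * q l n * P l m * (Ef m - E0 n) =
        p n * q l n * P l m * Ef m - p n * q l n * P l m * E0 n :=
      fun _ _ _ => by ring
    simp only [expand, Finset.sum_sub_distrib]
    congr 1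
    · rw [Finset.sum_comm]
      refine Finset.sum_congr rfl fun m _ => ?_
      rw [Finset.sum_comm, hs, Finset.sum_mul]
      refine Finset.sum_congr rfl fun l _ => ?_
      rw [hr, Finset.sum_mul, Finset.sum_mul]
    · refine Finset.sum_congr rfl fun n _ => ?_
      rw [Finset.sum_comm]
      have h1 : ∀ l, ∑ m, p n * q l n * P l m * E0 n = p n * q l n * E0 n := by
        intro l
        calc ∑ m, p n * q l n * P l m * E0 n
            = (p n * q l n * E0 n) * ∑ m, P l m := by
              rw [Finset.mul_sum]; exact Finset.sum_congr rfl fun m _ => by ring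
          _ = p n * q l n * E0 n := by rw [hP1, mul_one]
      simp only [h1]
      calc ∑ l, p n * q l n * E0 n = (p n * E0 n) * ∑ l, q l n := by
            rw [Finset.mul_sum]; exact Finset.sum_congr rfl fun l _ => by ring
        _ = p n * E0 n := by rw [hq1, mul_one]
  -- entropy of p
  have hlogp : ∀ n, Real.log (p n) = -β * E0 n - Real.log Z0 := fun n => by
    rw [hp, Real.log_div (Real.exp_ne_zero _) hZ0pos.ne', Real.log_exp]
  have hHp : ∑ n, Real.negMulLog (p n) = Real.log Z0 + β * ∑ n, p n * E0 n := by
    simp only [Real.negMulLog, hlogp]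
    calc ∑ n, -p n * (-β * E0 n - Real.log Z0)
        = ∑ n, (β * (p n * E0 n) + Real.log Z0 * p n) := by
          exact Finset.sum_congr rfl fun n _ => by ring
      _ = β * ∑ n, p n * E0 n + Real.log Z0 * ∑ n, p n := by
          rw [Finset.sum_add_distrib, Finset.mul_sum, Finset.mul_sum]
      _ = Real.log Z0 + β * ∑ n, p n * E0 n := by rw [hpsum]; ring
  -- the cross-entropy term
  have hlogf : ∀ m, Real.log (Real.exp (-β * Ef m) / Zf) = -β * Ef m - Real.log Zf :=
    fun m => by rw [Real.log_div (Real.exp_ne_zero _) hZfpos.ne', Real.log_exp]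
  have hCE : ∑ m, s m * Real.log (Real.exp (-β * Ef m) / Zf) =
      -(β * ∑ m, s m * Ef m) - Real.log Zf := by
    simp only [hlogf]
    calc ∑ m, s m * (-β * Ef m - Real.log Zf)
        = ∑ m, (-(β * (s m * Ef m)) - Real.log Zf * s m) := by
          exact Finset.sum_congr rfl fun m _ => by ring
      _ = -(β * ∑ m, s m * Ef m) - Real.log Zf * ∑ m, s m := by
          rw [Finset.sum_sub_distrib, Finset.mul_sum, Finset.mul_sum, Finset.sum_neg_distrib]
      _ = -(β * ∑ m, s m * Ef m) - Real.log Zf := by rw [hssum]; ring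
  have hβΔF : β * ΔF = Real.log Z0 - Real.log Zf := by
    rw [hΔF, ← mul_assoc, mul_inv_cancel₀ hβ.ne', one_mul,
      Real.log_div hZ0pos.ne' hZfpos.ne']
  rw [hΔS0, hD, hW', mul_sub, mul_sub, hβΔF, hCE]
  linarith [hHp]
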